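/- Let T be a pq-tree over a finite set U with weights w : U → ℤ, and let v be a q-node of T with children c_1, …, c_ℓ (ℓ ≥ 2) in their given order. Then inner(v) = max(x, y), where x = max_{1 ≤ i ≤ ℓ} inner(c_i) and y = max_{1 ≤ i < j ≤ ℓ} ( border(c_i) + border(c_j) + Σ_{ℓ′ = i+1}^{j−1} total(c_{ℓ′}) ). -/

import Mathlib

/-- A pq-tree: leaves carry elements of `U`; the children of each internal node
(a p-node or a q-node) are given as a sequence. -/
inductive PQTree (U : Type) : Type where
  | leaf : U → PQTree U
  | pnode : List (PQTree U) → PQTree U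
  | qnode : List (PQTree U) → PQTree U

namespace PQTree

variable {U : Type}

/-- The list of leaves below a node, read left to right in the given order. -/
def leaves : PQTree U → List U
  | leaf u => [u]
  | pnode cs => cs.attach.flatMap (fun c => leaves c.1)
  | qnode cs => cs.attach.flatMap (fun c => leaves c.1)
  decreasing_by
  · have := List.sizeOf_lt_of_mem c.2; simp; omega
  · have := List.sizeOf_lt_of_mem c.2; simp; omega

/-- `total(v) = Σ_{u ∈ leaves(v)} w(u)`. -/
def total (w : U → ℤ) (t : PQTree U) : ℤ :=
  ((leaves t).map w).sum

/-- `IsFrontier t l` holds when `l` is a frontier order of the pq-tree `t`: a linear order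
of its leaves obtained by reading the leaves left to right after independently permuting
the children sequence of each p-node arbitrarily and either keeping or reversing the
children sequence of each q-node. -/
inductive IsFrontier : PQTree U → List U → Prop where
  | leaf (u : U) : IsFrontier (leaf u) [u]
  | pnode (cs cs' : List (PQTree U)) (fs : List (List U)) :
      cs'.Perm cs → List.Forall₂ IsFrontier cs' fs →
      IsFrontier (pnode cs) fs.flatten
  | qnodeKeep (cs : List (PQTree U)) (fs : List (List U)) :
      List.Forall₂ IsFrontier cs fs →
      IsFrontier (qnode cs) fs.flatten
  | qnodeRev (cs : List (PQTree U)) (fs : List (List U)) :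
      List.Forall₂ IsFrontier cs.reverse fs →
      IsFrontier (qnode cs) fs.flatten

variable [DecidableEq U]

/-- `S` is compatible with the pq-tree `t`: some frontier order of `t` has a contiguous
segment whose elements are exactly `S` (in particular `S = ∅` is compatible). -/
def Compatible (S : Finset U) (t : PQTree U) : Prop :=
  ∃ l l₁ l₂ l₃ : List U, IsFrontier t l ∧ l = l₁ ++ l₂ ++ l₃ ∧ l₂.toFinset = S

/-- `S` is border-compatible with the pq-tree `t`: `S` is nonempty and in some frontier
order of `t` the elements of `S` occupy a set of consecutive positions containing the
first or the last position, i.e. `S` is a prefix or a suffix of the frontier. -/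
def BorderCompatible (S : Finset U) (t : PQTree U) : Prop :=
  S.Nonempty ∧ ∃ l l₁ l₂ : List U, IsFrontier t l ∧ l = l₁ ++ l₂ ∧
    (l₁.toFinset = S ∨ l₂.toFinset = S)

/-- `inner(v)`: the maximum of `Σ_{u∈S} w(u)` over all sets `S` compatible with the
subtree at `v` (including `S = ∅`, so `inner(v) ≥ 0`). -/
noncomputable def inner (w : U → ℤ) (t : PQTree U) : ℤ :=
  sSup {z : ℤ | ∃ S : Finset U, Compatible S t ∧ z = ∑ u ∈ S, w u}

/-- `border(v)`: the maximum of `Σ_{u∈S} w(u)` over all (nonempty) sets `S`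
border-compatible with the subtree at `v`. -/
noncomputable def border (w : U → ℤ) (t : PQTree U) : ℤ :=
  sSup {z : ℤ | ∃ S : Finset U, BorderCompatible S t ∧ z = ∑ u ∈ S, w u}

/-- A well-formed pq-tree: every internal node has a nonempty sequence of children
(so every subtree has at least one leaf). -/
inductive Proper : PQTree U → Prop where
  | leaf (u : U) : Proper (leaf u)
  | pnode (cs : List (PQTree U)) : cs ≠ [] → (∀ c ∈ cs, Proper c) → Proper (pnode cs)
  | qnode (cs : List (PQTree U)) : cs ≠ [] → (∀ c ∈ cs, Proper c) → Proper (qnode cs)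



set_option linter.unusedSectionVars false
set_option linter.unusedVariables false
set_option maxHeartbeats 1000000

theorem strongInd {P : PQTree U → Prop}
    (hl : ∀ u, P (.leaf u))
    (hp : ∀ cs, (∀ c ∈ cs, P c) → P (.pnode cs))
    (hq : ∀ cs, (∀ c ∈ cs, P c) → P (.qnode cs)) : ∀ t, P t
  | .leaf u => hl u
  | .pnode cs => hp cs (fun c hc => strongInd hl hp hq c)
  | .qnode cs => hq cs (fun c hc => strongInd hl hp hq c)
  decreasing_by
  all_goals (have := List.sizeOf_lt_of_mem hc; simp; omega)

theorem leaves_pnode (cs : List (PQTree U)) : leaves (pnode cs) = cs.flatMap leaves := by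
  rw [leaves]; simp [List.flatMap]

theorem leaves_qnode (cs : List (PQTree U)) : leaves (qnode cs) = cs.flatMap leaves := by
  rw [leaves]; simp [List.flatMap]

theorem forall₂_of_forall_mem {α β : Type*} {R : α → β → Prop} {S : α → β → Prop}
    {l₁ : List α} {l₂ : List β} (h : List.Forall₂ R l₁ l₂)
    (H : ∀ a ∈ l₁, ∀ b, R a b → S a b) : List.Forall₂ S l₁ l₂ := by
  induction h with
  | nil => exact List.Forall₂.nil
  | cons h₁ _ ih =>
    exact List.Forall₂.cons (H _ (by simp) _ h₁) (ih (fun a ha b => H a (by simp [ha]) b))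

theorem flatten_perm_flatMap {α β : Type*} {g : α → List β} {cs : List α} {fs : List (List β)}
    (h : List.Forall₂ (fun c f => List.Perm f (g c)) cs fs) :
    fs.flatten.Perm (cs.flatMap g) := by
  induction h with
  | nil => simp
  | cons h _ ih => simpa using h.append ih

theorem frontier_perm : ∀ (t : PQTree U), ∀ l, IsFrontier t l → l.Perm (leaves t) := by
  refine strongInd (fun u l h => ?_) (fun cs ih l h => ?_) (fun cs ih l h => ?_)
  · cases h; simp [leaves]
  · cases h with
    | pnode cs cs' fs hperm hf =>
      rw [leaves_pnode]
      have h2 := flatten_perm_flatMap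
        (forall₂_of_forall_mem hf (fun a ha b hb => ih a (hperm.mem_iff.mp ha) b hb))
      exact h2.trans (hperm.flatMap_right leaves)
  · cases h with
    | qnodeKeep cs fs hf =>
      rw [leaves_qnode]
      exact flatten_perm_flatMap (forall₂_of_forall_mem hf (fun a ha b hb => ih a ha b hb))
    | qnodeRev cs fs hf =>
      rw [leaves_qnode]
      have h2 := flatten_perm_flatMap
        (forall₂_of_forall_mem hf (fun a ha b hb => ih a (by simpa using ha) b hb))
      exact h2.trans ((cs.reverse_perm).flatMap_right leaves)

theorem frontier_reverse : ∀ (t : PQTree U), ∀ l, IsFrontier t l → IsFrontier t l.reverse := by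
  refine strongInd (fun u l h => ?_) (fun cs ih l h => ?_) (fun cs ih l h => ?_)
  · cases h; exact IsFrontier.leaf u
  · cases h with
    | pnode cs cs' fs hperm hf =>
      have h2 : List.Forall₂ IsFrontier cs'.reverse ((fs.map List.reverse).reverse) := by
        rw [← List.map_reverse, List.forall₂_map_right_iff]
        rw [List.forall₂_reverse_iff]
        exact forall₂_of_forall_mem hf (fun a ha b hb => ih a (hperm.mem_iff.mp ha) b hb)
      have := IsFrontier.pnode cs cs'.reverse ((fs.map List.reverse).reverse)
        ((cs'.reverse_perm).trans hperm) h2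
      rwa [← List.reverse_flatten] at this
  · cases h with
    | qnodeKeep cs fs hf =>
      have h2 : List.Forall₂ IsFrontier cs.reverse ((fs.map List.reverse).reverse) := by
        rw [← List.map_reverse, List.forall₂_map_right_iff, List.forall₂_reverse_iff]
        exact forall₂_of_forall_mem hf (fun a ha b hb => ih a ha b hb)
      have := IsFrontier.qnodeRev cs ((fs.map List.reverse).reverse) h2
      rwa [← List.reverse_flatten] at this
    | qnodeRev cs fs hf =>
      have h2 : List.Forall₂ IsFrontier cs ((fs.map List.reverse).reverse) := by
        rw [← List.map_reverse, List.forall₂_map_right_iff, ← List.forall₂_reverse_iff]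
        simp only [List.reverse_reverse]
        exact forall₂_of_forall_mem hf (fun a ha b hb => ih a (by simpa using ha) b hb)
      have := IsFrontier.qnodeKeep cs ((fs.map List.reverse).reverse) h2
      rwa [← List.reverse_flatten] at this

theorem exists_forall₂ {α β : Type*} {R : α → β → Prop} :
    ∀ {l : List α}, (∀ a ∈ l, ∃ b, R a b) → ∃ l₂, List.Forall₂ R l l₂
  | [], _ => ⟨[], List.Forall₂.nil⟩
  | a :: l, h => by
    obtain ⟨b, hb⟩ := h a (by simp)
    obtain ⟨l₂, hl₂⟩ := exists_forall₂ (fun x hx => h x (List.mem_cons_of_mem _ hx))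
    exact ⟨b :: l₂, List.Forall₂.cons hb hl₂⟩

theorem exists_frontier : ∀ (t : PQTree U), Proper t → ∃ l, IsFrontier t l := by
  refine strongInd (fun u h => ?_) (fun cs ih h => ?_) (fun cs ih h => ?_)
  · exact ⟨[u], IsFrontier.leaf u⟩
  · cases h with
    | pnode _ hne hall =>
      obtain ⟨fs, hfs⟩ := exists_forall₂ (fun a ha => ih a ha (hall a ha))
      exact ⟨fs.flatten, IsFrontier.pnode cs cs fs (List.Perm.refl _) hfs⟩
  · cases h with
    | qnode _ hne hall =>
      obtain ⟨fs, hfs⟩ := exists_forall₂ (fun a ha => ih a ha (hall a ha))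
      exact ⟨fs.flatten, IsFrontier.qnodeKeep cs fs hfs⟩

theorem leaves_ne_nil : ∀ (t : PQTree U), Proper t → leaves t ≠ [] := by
  refine strongInd (fun u h => ?_) (fun cs ih h => ?_) (fun cs ih h => ?_)
  · simp [leaves]
  · cases h with
    | pnode _ hne hall =>
      rw [leaves_pnode]
      obtain ⟨c, hc⟩ := List.exists_mem_of_ne_nil cs hne
      intro hcon
      exact ih c hc (hall c hc) (by
        have := List.flatMap_eq_nil_iff.mp hcon
        exact this _ hc)
  · cases h with
    | qnode _ hne hall =>
      rw [leaves_qnode]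
      obtain ⟨c, hc⟩ := List.exists_mem_of_ne_nil cs hne
      intro hcon
      exact ih c hc (hall c hc) (by
        have := List.flatMap_eq_nil_iff.mp hcon
        exact this _ hc)

theorem flatten_split1 {α : Type*} (L : List (List α)) (i : ℕ) (hi : i < L.length) :
    L.flatten = (L.take i).flatten ++ L[i] ++ (L.drop (i+1)).flatten := by
  conv_lhs => rw [← List.take_append_drop i L, List.drop_eq_getElem_cons hi]
  rw [List.flatten_append, List.flatten_cons, List.append_assoc]

theorem flatten_split2 {α : Type*} (L : List (List α)) (i j : ℕ) (hij : i < j)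
    (hj : j < L.length) :
    L.flatten = (L.take i).flatten ++ L[i] ++ ((L.drop (i+1)).take (j-i-1)).flatten
      ++ L[j] ++ (L.drop (j+1)).flatten := by
  rw [flatten_split1 L i (lt_trans hij hj)]
  have h1 : j - i - 1 < (L.drop (i+1)).length := by simp; omega
  rw [flatten_split1 (L.drop (i+1)) (j-i-1) h1]
  have h2 : (L.drop (i+1))[j-i-1]'h1 = L[j] := by
    rw [List.getElem_drop]; congr 1; omega
  have h3 : (L.drop (i+1)).drop (j-i-1+1) = L.drop (j+1) := by
    rw [List.drop_drop]; congr 1; omega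
  rw [h2, h3]
  simp

theorem take_flatten_cons {α : Type*} (L : List (List α)) (j : ℕ) (hj1 : 1 ≤ j)
    (hL : L ≠ []) :
    (L.take j).flatten = L[0]'(by cases L; simp at hL; simp) ++ ((L.drop 1).take (j-1)).flatten := by
  cases L with
  | nil => simp at hL
  | cons g L' =>
    cases j with
    | zero => omega
    | succ j => simp

/-- prefix decomposition: a nonempty prefix of a flatten ends inside some block. -/
theorem flatten_prefix_decomp {α : Type*} :
    ∀ (L : List (List α)) (m r : List α), L.flatten = m ++ r → m ≠ [] →
      ∃ j, ∃ hj : j < L.length, ∃ p b, p ≠ [] ∧ L[j] = p ++ b ∧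
        m = (L.take j).flatten ++ p
  | [], m, r, h, hm => by simp at h; exact absurd h.1 hm
  | f :: L, m, r, h, hm => by
    simp only [List.flatten_cons] at h
    rcases List.append_eq_append_iff.mp h with ⟨a', ha1, ha2⟩ | ⟨c', hc1, hc2⟩
    · -- m = f ++ a', flatten = a' ++ r
      by_cases ha : a' = []
      · subst ha
        refine ⟨0, by simp, m, [], hm, by simp [ha1], by simp⟩
      · obtain ⟨j, hj, p, b, hp, hLj, hm'⟩ := flatten_prefix_decomp L a' r ha2 ha
        exact ⟨j+1, by simpa using hj, p, b, hp, by simpa using hLj,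
          by rw [ha1, hm']; simp⟩
    · -- f = m ++ c'
      exact ⟨0, by simp, m, c', hm, by simp [hc1], by simp⟩

/-- segment decomposition for a nonempty segment of a flatten with nonempty blocks. -/
theorem flatten_segment_decomp {α : Type*} :
    ∀ (L : List (List α)) (l₁ l₂ l₃ : List α), L.flatten = l₁ ++ l₂ ++ l₃ → l₂ ≠ [] →
      (∀ x ∈ L, x ≠ []) →
      (∃ i, ∃ hi : i < L.length, ∃ a b, L[i] = a ++ l₂ ++ b) ∨
      (∃ i j, ∃ hi : i < L.length, ∃ hj : j < L.length, i < j ∧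
        ∃ s p, s ≠ [] ∧ p ≠ [] ∧ (∃ a, L[i] = a ++ s) ∧ (∃ b, L[j] = p ++ b) ∧
        l₂ = s ++ ((L.drop (i+1)).take (j-i-1)).flatten ++ p)
  | [], l₁, l₂, l₃, h, hne, hblocks => by
    simp at h
    exact absurd h.2.1 hne
  | f :: L, l₁, l₂, l₃, h, hne, hblocks => by
    simp only [List.flatten_cons, ← List.append_assoc] at h
    rcases List.append_eq_append_iff.mp h with ⟨a', ha1, ha2⟩ | ⟨c', hc1, hc2⟩
    · -- l₁ ++ l₂ = f ++ a', flatten = a' ++ l₃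
      rcases List.append_eq_append_iff.mp ha1.symm with ⟨t, ht1, ht2⟩ | ⟨s, hb1, hb2⟩
      · -- l₁ = f ++ t, a' = t ++ l₂ : recurse
        have hflat : L.flatten = t ++ l₂ ++ l₃ := by
          simp [ha2, ht2]
        rcases flatten_segment_decomp L t l₂ l₃ hflat hne
            (fun x hx => hblocks x (by simp [hx])) with
          ⟨i, hi, a, b, hib⟩ | ⟨i, j, hi, hj, hij, s, p, hs, hp, ⟨a, ha⟩, ⟨b, hb⟩, hl₂⟩
        · exact Or.inl ⟨i+1, by simpa using hi, a, b, by simpa using hib⟩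
        · refine Or.inr ⟨i+1, j+1, by simpa using hi, by simpa using hj, by omega,
            s, p, hs, hp, ⟨a, by simpa using ha⟩, ⟨b, by simpa using hb⟩, ?_⟩
          rw [hl₂]
          have harith : j + 1 - (i + 1) - 1 = j - i - 1 := by omega
          simp [harith]
      · -- f = l₁ ++ s, l₂ = s ++ a'
        by_cases hs : s = []
        · -- segment starts exactly at the boundary after f
          have hl₂a : l₂ = a' := by rw [hb2, hs]; simp
          have hflat : L.flatten = l₂ ++ l₃ := by rw [ha2, hl₂a]
          obtain ⟨j, hj, p, b, hp, hLj, hm'⟩ := flatten_prefix_decomp L l₂ l₃ hflat hne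
          by_cases hj0 : j = 0
          · subst hj0
            refine Or.inl ⟨1, by simpa using hj, [], b, ?_⟩
            simp at hm' ⊢
            rw [hLj, hm']
          · have hLne : L ≠ [] := by intro hcc; subst hcc; simp at hj
            have h0 : 0 < L.length := by cases L; simp at hLne; simp
            refine Or.inr ⟨1, j+1, by simp; omega, by simpa using hj, by omega,
              L[0]'h0, p, hblocks _ (by
                cases L with
                | nil => simp at hLne
                | cons g L' => simp), hp,
              ⟨[], by simpa using (List.getElem_cons_succ f L 0 (by simpa using h0)).symm ▸ rfl⟩,
              ⟨b, by simpa using hLj⟩, ?_⟩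
            rw [hm', take_flatten_cons L j (by omega) hLne]
            have harith : j + 1 - 1 - 1 = j - 1 := by omega
            simp [harith]
        · by_cases ha' : a' = []
          · -- l₂ = s : inside f
            refine Or.inl ⟨0, by simp, l₁, [], ?_⟩
            rw [List.getElem_cons_zero, hb1, hb2, ha']
            simp
          · obtain ⟨j, hj, p, b, hp, hLj, hm'⟩ := flatten_prefix_decomp L a' l₃ ha2 ha'
            refine Or.inr ⟨0, j+1, by simp, by simpa using hj, Nat.succ_pos j, s, p, hs, hp,
              ⟨l₁, by simpa using hb1⟩, ⟨b, by simpa using hLj⟩, ?_⟩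
            rw [hb2, hm']
            simp
    · -- f = (l₁ ++ l₂) ++ c' : whole segment inside f
      exact Or.inl ⟨0, by simp, l₁, c', by rw [List.getElem_cons_zero, hc1]⟩

theorem frontier_map_sum {w : U → ℤ} {t : PQTree U} {f : List U} (h : IsFrontier t f) :
    (f.map w).sum = total w t :=
  List.Perm.sum_eq (((frontier_perm t f h).map w))

theorem qnode_frontier_canon {cs : List (PQTree U)} {l : List U}
    (h : IsFrontier (qnode cs) l) :
    ∃ fs, List.Forall₂ IsFrontier cs fs ∧ (l = fs.flatten ∨ l.reverse = fs.flatten) := by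
  cases h with
  | qnodeKeep cs fs hf => exact ⟨fs, hf, Or.inl rfl⟩
  | qnodeRev cs fs hf =>
    refine ⟨(fs.reverse).map List.reverse, ?_, Or.inr ?_⟩
    · rw [List.forall₂_map_right_iff]
      have h1 : List.Forall₂ IsFrontier cs fs.reverse := by
        rw [← List.forall₂_reverse_iff]
        simpa using hf
      exact forall₂_of_forall_mem h1 (fun a _ b hb => frontier_reverse a b hb)
    · rw [List.reverse_flatten, List.map_reverse]

theorem forall₂_ofFn_get {ℓ : ℕ} {c : Fin ℓ → PQTree U} {fs : List (List U)}
    (h : List.Forall₂ IsFrontier (List.ofFn c) fs) :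
    fs.length = ℓ ∧ ∀ (t : ℕ) (ht : t < ℓ), IsFrontier (c ⟨t, ht⟩) (fs[t]'(by
      rw [← List.forall₂_iff_get.mp h |>.1 ]; simpa using ht)) := by
  rw [List.forall₂_iff_get] at h
  obtain ⟨hlen, hget⟩ := h
  simp only [List.length_ofFn] at hlen
  refine ⟨hlen.symm, fun t ht => ?_⟩
  have := hget t (by simpa using ht) (by omega)
  simpa using this

theorem forall₂_ofFn_of_get {ℓ : ℕ} {c : Fin ℓ → PQTree U} {f : Fin ℓ → List U}
    (h : ∀ i : Fin ℓ, IsFrontier (c i) (f i)) :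
    List.Forall₂ IsFrontier (List.ofFn c) (List.ofFn f) := by
  rw [List.forall₂_iff_get]
  refine ⟨by simp, fun i h₁ h₂ => ?_⟩
  simp only [List.get_eq_getElem, List.getElem_ofFn]
  exact h _

/-- reindexing the strictly-between sum. -/
theorem sum_between {ℓ : ℕ} (g : Fin ℓ → ℤ) (i j : Fin ℓ) (hij : i < j) :
    ∑ t ∈ Finset.univ.filter (fun t : Fin ℓ => i < t ∧ t < j), g t =
      ∑ k : Fin (j.val - i.val - 1), g ⟨i.val + 1 + k.val, by have := j.isLt; omega⟩ := by
  have hjl := j.isLt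
  have hij' : i.val < j.val := hij
  by_cases hj1 : j.val ≤ i.val + 1
  · have hL : ∑ t ∈ Finset.univ.filter (fun t : Fin ℓ => i < t ∧ t < j), g t = 0 := by
      apply Finset.sum_eq_zero
      intro t ht
      simp only [Finset.mem_filter, Finset.mem_univ, true_and, Fin.lt_def] at ht
      exact absurd ht (by omega)
    have hR : (∑ k : Fin (j.val - i.val - 1),
        g ⟨i.val + 1 + k.val, by have := j.isLt; omega⟩) = 0 :=
      Finset.sum_eq_zero (fun k _ => absurd k.isLt (by omega))
    rw [hL, hR]
  push_neg at hj1
  have hpos : 0 < j.val - i.val - 1 := by omega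
  refine Finset.sum_nbij' (i := fun t : Fin ℓ =>
      (⟨(t.val - i.val - 1) % (j.val - i.val - 1),
        Nat.mod_lt _ hpos⟩ : Fin (j.val - i.val - 1)))
    (j := fun k => ⟨i.val + 1 + k.val, by have := k.isLt; omega⟩) ?_ ?_ ?_ ?_ ?_
  · intro a _; exact Finset.mem_univ _
  · intro k _
    have hk := k.isLt
    rw [Finset.mem_filter]
    exact ⟨Finset.mem_univ _, by rw [Fin.lt_def]; simp; omega, by rw [Fin.lt_def]; simp; omega⟩
  · intro a ha
    rw [Finset.mem_filter] at ha
    have h1 : i.val < a.val := ha.2.1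
    have h2 : a.val < j.val := ha.2.2
    have hmod : (a.val - i.val - 1) % (j.val - i.val - 1) = a.val - i.val - 1 :=
      Nat.mod_eq_of_lt (by omega)
    apply Fin.ext
    simp only [hmod]
    omega
  · intro k _
    have hk := k.isLt
    have hmod : (i.val + 1 + k.val - i.val - 1) % (j.val - i.val - 1) = k.val := by
      have : i.val + 1 + k.val - i.val - 1 = k.val := by omega
      rw [this]
      exact Nat.mod_eq_of_lt hk
    apply Fin.ext
    simp only [hmod]
  · intro a ha
    rw [Finset.mem_filter] at ha
    have h1 : i.val < a.val := ha.2.1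
    have h2 : a.val < j.val := ha.2.2
    have hmod : (a.val - i.val - 1) % (j.val - i.val - 1) = a.val - i.val - 1 :=
      Nat.mod_eq_of_lt (by omega)
    congr 1
    apply Fin.ext
    simp only [hmod]
    omega

theorem mid_sum {w : U → ℤ} {ℓ : ℕ} {c : Fin ℓ → PQTree U} {fs : List (List U)}
    (hfs : List.Forall₂ IsFrontier (List.ofFn c) fs) (i j : Fin ℓ) (hij : i < j) :
    ((((fs.drop (i.val+1)).take (j.val-i.val-1)).flatten).map w).sum =
      ∑ t ∈ Finset.univ.filter (fun t : Fin ℓ => i < t ∧ t < j), total w (c t) := by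
  obtain ⟨hlen, hget⟩ := forall₂_ofFn_get hfs
  have hjl := j.isLt
  have hlenmid : ((fs.drop (i.val+1)).take (j.val-i.val-1)).length = j.val - i.val - 1 := by
    rw [List.length_take, List.length_drop, hlen]
    omega
  have hmap : (((fs.drop (i.val+1)).take (j.val-i.val-1)).map (List.map w)).map List.sum =
      List.ofFn (fun k : Fin (j.val-i.val-1) =>
        total w (c ⟨i.val+1+k.val, by have := j.isLt; omega⟩)) := by
    apply List.ext_getElem
    · rw [List.length_map, List.length_map, hlenmid, List.length_ofFn]
    · intro n h₁ h₂
      rw [List.getElem_map, List.getElem_map, List.getElem_take, List.getElem_drop,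
        List.getElem_ofFn]
      have hn : i.val + 1 + n < ℓ := by
        have := h₂; simp at this; omega
      rw [frontier_map_sum (hget (i.val+1+n) hn)]
  rw [List.map_flatten, List.sum_flatten, hmap, List.sum_ofFn, sum_between _ i j hij]

theorem compat_sum_le {w : U → ℤ} {S : Finset U} {t : PQTree U} (l l₂ : List U)
    (hfr : IsFrontier t l) (hsub : l₂ ⊆ l) (hS : l₂.toFinset = S) :
    ∑ u ∈ S, w u ≤ ∑ u ∈ (leaves t).toFinset, max (w u) 0 := by
  have hsubS : S ⊆ (leaves t).toFinset := by
    rw [← hS]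
    intro u hu
    rw [List.mem_toFinset] at hu ⊢
    exact (frontier_perm t l hfr).mem_iff.mp (hsub hu)
  calc ∑ u ∈ S, w u ≤ ∑ u ∈ S, max (w u) 0 := Finset.sum_le_sum (fun u _ => le_max_left _ _)
    _ ≤ _ := Finset.sum_le_sum_of_subset_of_nonneg hsubS (fun u _ _ => le_max_right _ _)

theorem bddAbove_inner (w : U → ℤ) (t : PQTree U) :
    BddAbove {z : ℤ | ∃ S : Finset U, Compatible S t ∧ z = ∑ u ∈ S, w u} := by
  refine ⟨∑ u ∈ (leaves t).toFinset, max (w u) 0, fun z hz => ?_⟩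
  obtain ⟨S, ⟨l, l₁, l₂, l₃, hfr, hdecomp, hS⟩, rfl⟩ := hz
  exact compat_sum_le l l₂ hfr (by rw [hdecomp]; intro x hx; simp [hx]) hS

theorem bddAbove_border (w : U → ℤ) (t : PQTree U) :
    BddAbove {z : ℤ | ∃ S : Finset U, BorderCompatible S t ∧ z = ∑ u ∈ S, w u} := by
  refine ⟨∑ u ∈ (leaves t).toFinset, max (w u) 0, fun z hz => ?_⟩
  obtain ⟨S, ⟨hne, l, l₁, l₂, hfr, hdecomp, hS⟩, rfl⟩ := hz
  rcases hS with hS | hS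
  · exact compat_sum_le l l₁ hfr (by rw [hdecomp]; intro x hx; simp [hx]) hS
  · exact compat_sum_le l l₂ hfr (by rw [hdecomp]; intro x hx; simp [hx]) hS

theorem inner_set_nonempty {w : U → ℤ} {t : PQTree U} (hp : Proper t) :
    {z : ℤ | ∃ S : Finset U, Compatible S t ∧ z = ∑ u ∈ S, w u}.Nonempty := by
  obtain ⟨l, hl⟩ := exists_frontier t hp
  exact ⟨0, ∅, ⟨l, l, [], [], hl, by simp, by simp⟩, by simp⟩

theorem border_set_nonempty {w : U → ℤ} {t : PQTree U} (hp : Proper t) :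
    {z : ℤ | ∃ S : Finset U, BorderCompatible S t ∧ z = ∑ u ∈ S, w u}.Nonempty := by
  obtain ⟨l, hl⟩ := exists_frontier t hp
  have hlne : l ≠ [] := by
    intro hc
    subst hc
    have := (frontier_perm t [] hl).symm.eq_nil
    exact leaves_ne_nil t hp this
  exact ⟨∑ u ∈ l.toFinset, w u, l.toFinset,
    ⟨by rwa [List.toFinset_nonempty_iff], l, l, [], hl, by simp, Or.inl rfl⟩, rfl⟩

theorem border_attained (w : U → ℤ) {t : PQTree U} (hp : Proper t) :
    ∃ S : Finset U, BorderCompatible S t ∧ border w t = ∑ u ∈ S, w u :=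
  Int.csSup_mem (border_set_nonempty hp) (bddAbove_border w t)

/-- a border-compatible set can be realized as a suffix of some frontier. -/
theorem border_suffix {S : Finset U} {t : PQTree U} (h : BorderCompatible S t) :
    ∃ f a s, IsFrontier t f ∧ f = a ++ s ∧ s.toFinset = S := by
  obtain ⟨hne, l, l₁, l₂, hfr, hdecomp, hS⟩ := h
  rcases hS with hS | hS
  · refine ⟨l.reverse, l₂.reverse, l₁.reverse, frontier_reverse t l hfr, ?_, by simpa using hS⟩
    rw [hdecomp]
    simp
  · exact ⟨l, l₁, l₂, hfr, hdecomp, hS⟩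

/-- a border-compatible set can be realized as a prefix of some frontier. -/
theorem border_prefix {S : Finset U} {t : PQTree U} (h : BorderCompatible S t) :
    ∃ f p b, IsFrontier t f ∧ f = p ++ b ∧ p.toFinset = S := by
  obtain ⟨hne, l, l₁, l₂, hfr, hdecomp, hS⟩ := h
  rcases hS with hS | hS
  · exact ⟨l, l₁, l₂, hfr, hdecomp, hS⟩
  · refine ⟨l.reverse, l₂.reverse, l₁.reverse, frontier_reverse t l hfr, ?_, by simpa using hS⟩
    rw [hdecomp]
    simp

theorem frontier_ne_nil {t : PQTree U} {f : List U} (hp : Proper t) (h : IsFrontier t f) :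
    f ≠ [] := by
  intro hc
  subst hc
  exact leaves_ne_nil t hp (frontier_perm t [] h).symm.eq_nil

theorem inner_nonneg {w : U → ℤ} {t : PQTree U} (hp : Proper t) : 0 ≤ inner w t := by
  obtain ⟨l, hl⟩ := exists_frontier t hp
  exact le_csSup (bddAbove_inner w t) ⟨∅, ⟨l, l, [], [], hl, by simp, by simp⟩, by simp⟩

section Main

variable {w : U → ℤ} {ℓ : ℕ} {c : Fin ℓ → PQTree U}

theorem part1_aux (hℓ : 2 ≤ ℓ) (hp : Proper (qnode (List.ofFn c)))
    (hnd : (leaves (qnode (List.ofFn c))).Nodup)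
    (S : Finset U) (fs : List (List U)) (m₁ m₂ m₃ : List U)
    (hfs : List.Forall₂ IsFrontier (List.ofFn c) fs)
    (heq : fs.flatten = m₁ ++ m₂ ++ m₃) (hS : m₂.toFinset = S)
    (hfnd : fs.flatten.Nodup) :
    ∑ u ∈ S, w u ≤
      max
        (sSup {z : ℤ | ∃ i : Fin ℓ, z = inner w (c i)})
        (sSup {z : ℤ | ∃ i j : Fin ℓ, i < j ∧ z = border w (c i) + border w (c j) +
          ∑ t ∈ Finset.univ.filter (fun t : Fin ℓ => i < t ∧ t < j), total w (c t)}) := by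
  have hpc : ∀ i : Fin ℓ, Proper (c i) := by
    intro i
    cases hp with
    | qnode _ hne hall => exact hall (c i) (by rw [List.mem_ofFn]; exact ⟨i, rfl⟩)
  obtain ⟨hlen, hget⟩ := forall₂_ofFn_get hfs
  have hXbdd : BddAbove {z : ℤ | ∃ i : Fin ℓ, z = inner w (c i)} := by
    have : {z : ℤ | ∃ i : Fin ℓ, z = inner w (c i)} ⊆
        Set.range (fun i : Fin ℓ => inner w (c i)) := by
      rintro z ⟨i, rfl⟩; exact ⟨i, rfl⟩
    exact ((Set.finite_range _).subset this).bddAbove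
  have hYbdd : BddAbove {z : ℤ | ∃ i j : Fin ℓ, i < j ∧ z = border w (c i) + border w (c j) +
      ∑ t ∈ Finset.univ.filter (fun t : Fin ℓ => i < t ∧ t < j), total w (c t)} := by
    have : {z : ℤ | ∃ i j : Fin ℓ, i < j ∧ z = border w (c i) + border w (c j) +
        ∑ t ∈ Finset.univ.filter (fun t : Fin ℓ => i < t ∧ t < j), total w (c t)} ⊆
        Set.range (fun p : Fin ℓ × Fin ℓ => border w (c p.1) + border w (c p.2) +
          ∑ t ∈ Finset.univ.filter (fun t : Fin ℓ => p.1 < t ∧ t < p.2), total w (c t)) := by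
      rintro z ⟨i, j, _, rfl⟩; exact ⟨(i, j), rfl⟩
    exact ((Set.finite_range _).subset this).bddAbove
  have hm₂nd : m₂.Nodup := by
    refine List.Nodup.sublist ?_ hfnd
    rw [heq, List.append_assoc]
    exact (List.sublist_append_left m₂ m₃).trans (List.sublist_append_right _ _)
  have hsum : ∑ u ∈ S, w u = (m₂.map w).sum := by
    rw [← hS, List.sum_toFinset _ hm₂nd]
  by_cases hm₂ : m₂ = []
  · rw [hsum, hm₂]
    simp only [List.map_nil, List.sum_nil]
    refine le_trans (inner_nonneg (w := w) (hpc ⟨0, by omega⟩)) (le_trans ?_ (le_max_left _ _))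
    exact le_csSup hXbdd ⟨⟨0, by omega⟩, rfl⟩
  · have hblocks : ∀ x ∈ fs, x ≠ [] := by
      intro x hx
      obtain ⟨t, ht, rfl⟩ := List.mem_iff_getElem.mp hx
      exact frontier_ne_nil (hpc ⟨t, by omega⟩) (hget t (by omega))
    rcases flatten_segment_decomp fs m₁ m₂ m₃ heq hm₂ hblocks with
      ⟨i, hi, a, b, hib⟩ | ⟨i, j, hi, hj, hij, s, p, hsne, hpne, ⟨a, ha⟩, ⟨b, hb⟩, hm₂eq⟩
    · -- within a single child
      have hi' : i < ℓ := by omega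
      have hcompat : Compatible S (c ⟨i, hi'⟩) :=
        ⟨fs[i], a, m₂, b, hget i hi', hib, hS⟩
      refine le_trans (le_trans ?_ (le_csSup hXbdd ⟨⟨i, hi'⟩, rfl⟩)) (le_max_left _ _)
      exact le_csSup (bddAbove_inner w _) ⟨S, hcompat, rfl⟩
    · -- spanning case
      have hi' : i < ℓ := by omega
      have hj' : j < ℓ := by omega
      set i' : Fin ℓ := ⟨i, hi'⟩
      set j' : Fin ℓ := ⟨j, hj'⟩
      have hij' : i' < j' := Fin.lt_def.mpr hij
      have hsnd : s.Nodup := by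
        refine List.Nodup.sublist ?_ (hm₂nd)
        rw [hm₂eq, List.append_assoc]
        exact List.sublist_append_left _ _
      have hpnd : p.Nodup := by
        refine List.Nodup.sublist ?_ (hm₂nd)
        rw [hm₂eq]
        exact List.sublist_append_right _ _
      have hsle : (s.map w).sum ≤ border w (c i') := by
        refine le_csSup (bddAbove_border w _) ⟨s.toFinset,
          ⟨by rwa [List.toFinset_nonempty_iff], fs[i], a, s, hget i hi', ha, Or.inr rfl⟩, ?_⟩
        rw [List.sum_toFinset _ hsnd]
      have hple : (p.map w).sum ≤ border w (c j') := by
        refine le_csSup (bddAbove_border w _) ⟨p.toFinset,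
          ⟨by rwa [List.toFinset_nonempty_iff], fs[j], p, b, hget j hj', hb, Or.inl rfl⟩, ?_⟩
        rw [List.sum_toFinset _ hpnd]
      have hmid : ((((fs.drop (i+1)).take (j-i-1)).flatten).map w).sum =
          ∑ t ∈ Finset.univ.filter (fun t : Fin ℓ => i' < t ∧ t < j'), total w (c t) :=
        mid_sum hfs i' j' hij'
      have hz : ∑ u ∈ S, w u = (s.map w).sum +
          ((((fs.drop (i+1)).take (j-i-1)).flatten).map w).sum + (p.map w).sum := by
        rw [hsum, hm₂eq]
        simp [List.map_append, List.sum_append]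
        ring
      rw [hz]
      refine le_trans ?_ (le_max_right _ _)
      refine le_trans ?_ (le_csSup hYbdd ⟨i', j', hij', rfl⟩)
      rw [hmid]
      have := add_le_add (add_le_add hsle (le_refl (∑ t ∈ Finset.univ.filter
        (fun t : Fin ℓ => i' < t ∧ t < j'), total w (c t)))) hple
      linarith

end Main

section Main2

variable {w : U → ℤ} {ℓ : ℕ} {c : Fin ℓ → PQTree U}

theorem compat_lift (hp : Proper (qnode (List.ofFn c))) (i : Fin ℓ) {S : Finset U}
    (h : Compatible S (c i)) : Compatible S (qnode (List.ofFn c)) := by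
  have hpc : ∀ k : Fin ℓ, Proper (c k) := by
    intro k
    cases hp with
    | qnode _ hne hall => exact hall (c k) (by rw [List.mem_ofFn]; exact ⟨k, rfl⟩)
  obtain ⟨l, l₁, l₂, l₃, hfr, hdec, hS⟩ := h
  classical
  set f : Fin ℓ → List U := fun k =>
    if h : k = i then l else Classical.choose (exists_frontier _ (hpc k)) with hf_def
  have hfk : ∀ k : Fin ℓ, IsFrontier (c k) (f k) := by
    intro k
    by_cases hk : k = i
    · subst hk; simp [hf_def, hfr]
    · simp only [hf_def, dif_neg hk]
      exact Classical.choose_spec (exists_frontier _ (hpc k))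
  set fs := List.ofFn f with hfs_def
  have hQfr : IsFrontier (qnode (List.ofFn c)) fs.flatten :=
    IsFrontier.qnodeKeep _ _ (forall₂_ofFn_of_get hfk)
  have hilen : (i : ℕ) < fs.length := by simp [hfs_def]
  have hsplit := flatten_split1 fs i hilen
  have hgi : fs[(i : ℕ)]'hilen = l := by
    simp [hfs_def, List.getElem_ofFn, hf_def]
  refine ⟨fs.flatten, (fs.take i).flatten ++ l₁, l₂, l₃ ++ (fs.drop (i+1)).flatten, hQfr, ?_, hS⟩
  rw [hsplit, hgi, hdec]
  simp

theorem spanning_lift (hp : Proper (qnode (List.ofFn c)))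
    (hnd : (leaves (qnode (List.ofFn c))).Nodup) (i j : Fin ℓ) (hij : i < j) :
    ∃ S : Finset U, Compatible S (qnode (List.ofFn c)) ∧
      border w (c i) + border w (c j) +
        ∑ t ∈ Finset.univ.filter (fun t : Fin ℓ => i < t ∧ t < j), total w (c t) =
      ∑ u ∈ S, w u := by
  have hpc : ∀ k : Fin ℓ, Proper (c k) := by
    intro k
    cases hp with
    | qnode _ hne hall => exact hall (c k) (by rw [List.mem_ofFn]; exact ⟨k, rfl⟩)
  obtain ⟨Si, hbci, hbi⟩ := border_attained w (hpc i)
  obtain ⟨Sj, hbcj, hbj⟩ := border_attained w (hpc j)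
  obtain ⟨fi, ai, si, hfrI, hfieq, hsiS⟩ := border_suffix hbci
  obtain ⟨fj, pj, bj, hfrJ, hfjeq, hpjS⟩ := border_prefix hbcj
  classical
  have hine : i ≠ j := Fin.ne_of_lt hij
  set f : Fin ℓ → List U := fun k =>
    if h : k = i then fi else if h' : k = j then fj
    else Classical.choose (exists_frontier _ (hpc k)) with hf_def
  have hfk : ∀ k : Fin ℓ, IsFrontier (c k) (f k) := by
    intro k
    by_cases hk : k = i
    · subst hk; simp [hf_def, hfrI]
    · by_cases hk' : k = j
      · subst hk'; simp [hf_def, hk, hfrJ]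
      · simp only [hf_def, dif_neg hk, dif_neg hk']
        exact Classical.choose_spec (exists_frontier _ (hpc k))
  set fs := List.ofFn f with hfs_def
  have hFor : List.Forall₂ IsFrontier (List.ofFn c) fs := forall₂_ofFn_of_get hfk
  have hQfr : IsFrontier (qnode (List.ofFn c)) fs.flatten :=
    IsFrontier.qnodeKeep _ _ hFor
  have hjlen : (j : ℕ) < fs.length := by simp [hfs_def]
  have hijv : (i : ℕ) < (j : ℕ) := hij
  have hsplit := flatten_split2 fs i j hijv hjlen
  have hgi : fs[(i : ℕ)]'(by omega) = fi := by
    simp [hfs_def, List.getElem_ofFn, hf_def]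
  have hgj : fs[(j : ℕ)]'hjlen = fj := by
    simp [hfs_def, List.getElem_ofFn, hf_def, hine.symm]
  set M := ((fs.drop ((i : ℕ)+1)).take ((j : ℕ)-(i : ℕ)-1)).flatten with hM_def
  set l₂ : List U := si ++ M ++ pj with hl₂_def
  have hl : fs.flatten = ((fs.take (i : ℕ)).flatten ++ ai) ++ l₂ ++
      (bj ++ (fs.drop ((j : ℕ)+1)).flatten) := by
    rw [hsplit, hgi, hgj, hfieq, hfjeq, hl₂_def]
    simp
  have hnd' : fs.flatten.Nodup :=
    ((frontier_perm _ _ hQfr).nodup_iff).mpr hnd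
  have hl₂nd : l₂.Nodup := by
    refine List.Nodup.sublist ?_ hnd'
    rw [hl, List.append_assoc]
    exact (List.sublist_append_left _ _).trans (List.sublist_append_right _ _)
  have hsind : si.Nodup := by
    refine List.Nodup.sublist ?_ hl₂nd
    rw [hl₂_def, List.append_assoc]
    exact List.sublist_append_left _ _
  have hpjnd : pj.Nodup := by
    refine List.Nodup.sublist ?_ hl₂nd
    rw [hl₂_def]
    exact List.sublist_append_right _ _
  refine ⟨l₂.toFinset, ⟨fs.flatten, (fs.take (i : ℕ)).flatten ++ ai, l₂,
    bj ++ (fs.drop ((j : ℕ)+1)).flatten, hQfr, hl, rfl⟩, ?_⟩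
  rw [List.sum_toFinset _ hl₂nd, hl₂_def]
  simp only [List.map_append, List.sum_append]
  have h1 : (si.map w).sum = border w (c i) := by
    rw [hbi, ← hsiS, List.sum_toFinset _ hsind]
  have h2 : (pj.map w).sum = border w (c j) := by
    rw [hbj, ← hpjS, List.sum_toFinset _ hpjnd]
  have h3 : ((M.map w)).sum =
      ∑ t ∈ Finset.univ.filter (fun t : Fin ℓ => i < t ∧ t < j), total w (c t) := by
    rw [hM_def]
    exact mid_sum hFor i j hij
  rw [h1, h2, h3]
  ring

end Main2

/-- **Lemma: `inner` at a q-node.** For a q-node `v` with children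
`c_1, …, c_ℓ` (`ℓ ≥ 2`) in their given order, `inner(v) = max(x, y)` where
`x = max_i inner(c_i)` and
`y = max_{i<j} (border(c_i) + border(c_j) + Σ_{i<ℓ′<j} total(c_{ℓ′}))`. -/
theorem inner_qnode {U : Type} [DecidableEq U] (w : U → ℤ) (ℓ : ℕ) (hℓ : 2 ≤ ℓ)
    (c : Fin ℓ → PQTree U) (hp : Proper (qnode (List.ofFn c)))
    (hnd : (leaves (qnode (List.ofFn c))).Nodup) :
    inner w (qnode (List.ofFn c)) =
      max
        (sSup {z : ℤ | ∃ i : Fin ℓ, z = inner w (c i)})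
        (sSup {z : ℤ | ∃ i j : Fin ℓ, i < j ∧ z = border w (c i) + border w (c j) +
          ∑ t ∈ Finset.univ.filter (fun t : Fin ℓ => i < t ∧ t < j), total w (c t)}) := by
  have hpc : ∀ k : Fin ℓ, Proper (c k) := by
    intro k
    cases hp with
    | qnode _ hne hall => exact hall (c k) (by rw [List.mem_ofFn]; exact ⟨k, rfl⟩)
  have hXne : {z : ℤ | ∃ i : Fin ℓ, z = inner w (c i)}.Nonempty :=
    ⟨inner w (c ⟨0, by omega⟩), ⟨0, by omega⟩, rfl⟩
  have hYne : {z : ℤ | ∃ i j : Fin ℓ, i < j ∧ z = border w (c i) + border w (c j) +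
      ∑ t ∈ Finset.univ.filter (fun t : Fin ℓ => i < t ∧ t < j), total w (c t)}.Nonempty :=
    ⟨_, ⟨0, by omega⟩, ⟨1, by omega⟩, by simp [Fin.lt_def], rfl⟩
  apply le_antisymm
  · rw [inner]
    apply csSup_le (inner_set_nonempty hp)
    rintro z ⟨S, ⟨l, l₁, l₂, l₃, hfr, hdec, hS⟩, rfl⟩
    obtain ⟨fs, hfs, hcan⟩ := qnode_frontier_canon hfr
    have hlnd : l.Nodup := ((frontier_perm _ _ hfr).nodup_iff).mpr hnd
    rcases hcan with hcan | hcan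
    · exact part1_aux hℓ hp hnd S fs l₁ l₂ l₃ hfs (by rw [← hcan, hdec]) hS
        (by rw [← hcan]; exact hlnd)
    · refine part1_aux hℓ hp hnd S fs l₃.reverse l₂.reverse l₁.reverse hfs ?_
        (by simp [hS]) ?_
      · rw [← hcan, hdec]; simp
      · rw [← hcan]; simp [hlnd]
  · apply max_le
    · apply csSup_le hXne
      rintro z ⟨i, rfl⟩
      rw [inner]
      apply csSup_le (inner_set_nonempty (hpc i))
      rintro z' ⟨S, hcomp, rfl⟩
      exact le_csSup (bddAbove_inner w _) ⟨S, compat_lift hp i hcomp, rfl⟩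
    · apply csSup_le hYne
      rintro z ⟨i, j, hij, rfl⟩
      obtain ⟨S, hcomp, heq⟩ := spanning_lift hp hnd i j hij
      rw [heq]
      exact le_csSup (bddAbove_inner w _) ⟨S, hcomp, rfl⟩
end PQTree
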